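/- In the nested sequent calculus for GL, the identity rule on arbitrary formulas is admissible: for every unary context Γ{-} and every formula A, the sequent Γ{A⊥, A} is derivable. -/

import Mathlib

/-- Formulas of GL in negation normal form. -/
inductive Formula : Type where
  | pos : ℕ → Formula
  | neg : ℕ → Formula
  | and : Formula → Formula → Formula
  | or  : Formula → Formula → Formula
  | box : Formula → Formula
  | dia : Formula → Formula
deriving DecidableEq

/-- Negation `A⊥` of a formula, via De Morgan duality. -/
def Formula.negate : Formula → Formula
  | .pos a => .neg a
  | .neg a => .pos a
  | .and A B => .or A.negate B.negate
  | .or A B => .and A.negate B.negate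
  | .box A => .dia A.negate
  | .dia A => .box A.negate

/-- An element of a nested sequent: a formula or a nested (bracketed) sequent. -/
inductive SeqElem : Type where
  | fml : Formula → SeqElem
  | nest : List SeqElem → SeqElem

/-- A nested sequent. -/
abbrev Sequent := List SeqElem

/-- Unary contexts: a nested sequent with a single hole. -/
inductive Ctx : Type where
  | hole : Sequent → Ctx
  | nest : Sequent → Ctx → Ctx

/-- Fill the hole of a context with a sequent. -/
def Ctx.fill : Ctx → Sequent → Sequent
  | .hole Δ, Γ => Δ ++ Γ
  | .nest Δ c, Γ => .nest (c.fill Γ) :: Δ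

/-- Depth of a context: number of brackets surrounding the hole. -/
def Ctx.depth : Ctx → ℕ
  | .hole _ => 0
  | .nest _ c => c.depth + 1

/-- Equivalence of nested sequents up to (deep) exchange. -/
inductive SeqEquiv : Sequent → Sequent → Prop where
  | nil : SeqEquiv [] []
  | cons {e : SeqElem} {Γ Δ : Sequent} : SeqEquiv Γ Δ → SeqEquiv (e :: Γ) (e :: Δ)
  | consNest {Γ' Δ' Γ Δ : Sequent} :
      SeqEquiv Γ' Δ' → SeqEquiv Γ Δ → SeqEquiv (.nest Γ' :: Γ) (.nest Δ' :: Δ)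
  | swap (a b : SeqElem) (Γ : Sequent) : SeqEquiv (a :: b :: Γ) (b :: a :: Γ)
  | trans {Γ Δ Θ : Sequent} : SeqEquiv Γ Δ → SeqEquiv Δ Θ → SeqEquiv Γ Θ

/-- `DerivH n Γ`: `Γ` has a cut-free derivation of height at most `n`. -/
inductive DerivH : ℕ → Sequent → Prop where
  | id (n : ℕ) (c : Ctx) (a : ℕ) :
      DerivH n (c.fill [.fml (.pos a), .fml (.neg a)])
  | and {n : ℕ} {c : Ctx} {A B : Formula} :
      DerivH n (c.fill [.fml A]) → DerivH n (c.fill [.fml B]) →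
      DerivH (n + 1) (c.fill [.fml (.and A B)])
  | or {n : ℕ} {c : Ctx} {A B : Formula} :
      DerivH n (c.fill [.fml A, .fml B]) →
      DerivH (n + 1) (c.fill [.fml (.or A B)])
  | box {n : ℕ} {c : Ctx} {A : Formula} :
      DerivH n (c.fill [.nest [.fml (.dia A.negate), .fml A]]) →
      DerivH (n + 1) (c.fill [.fml (.box A)])
  | dia {n : ℕ} (c d : Ctx) {A : Formula} :
      0 < d.depth →
      DerivH n (c.fill (d.fill [.fml A] ++ [.fml (.dia A)])) →
      DerivH (n + 1) (c.fill (d.fill [] ++ [.fml (.dia A)]))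
  | exch {n : ℕ} {Γ Δ : Sequent} : SeqEquiv Γ Δ → DerivH n Γ → DerivH n Δ
  | up {n : ℕ} {Γ : Sequent} : DerivH n Γ → DerivH (n + 1) Γ

/-- Derivability where cut is permitted on formulas satisfying `P`. -/
inductive DerivWith (P : Formula → Prop) : Sequent → Prop where
  | id (c : Ctx) (a : ℕ) :
      DerivWith P (c.fill [.fml (.pos a), .fml (.neg a)])
  | and {c : Ctx} {A B : Formula} :
      DerivWith P (c.fill [.fml A]) → DerivWith P (c.fill [.fml B]) →
      DerivWith P (c.fill [.fml (.and A B)])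
  | or {c : Ctx} {A B : Formula} :
      DerivWith P (c.fill [.fml A, .fml B]) →
      DerivWith P (c.fill [.fml (.or A B)])
  | box {c : Ctx} {A : Formula} :
      DerivWith P (c.fill [.nest [.fml (.dia A.negate), .fml A]]) →
      DerivWith P (c.fill [.fml (.box A)])
  | dia (c d : Ctx) {A : Formula} :
      0 < d.depth →
      DerivWith P (c.fill (d.fill [.fml A] ++ [.fml (.dia A)])) →
      DerivWith P (c.fill (d.fill [] ++ [.fml (.dia A)]))
  | cut {c : Ctx} {A : Formula} : P A →
      DerivWith P (c.fill [.fml A]) → DerivWith P (c.fill [.fml A.negate]) →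
      DerivWith P (c.fill [])
  | exch {Γ Δ : Sequent} : SeqEquiv Γ Δ → DerivWith P Γ → DerivWith P Δ

/-- Cut-free derivability. -/
abbrev Deriv : Sequent → Prop := DerivWith (fun _ => False)

lemma seqEquiv_refl : ∀ Γ : Sequent, SeqEquiv Γ Γ
  | [] => .nil
  | _ :: Γ => .cons (seqEquiv_refl Γ)

lemma seqEquiv_of_perm {Γ Δ : Sequent} (h : Γ.Perm Δ) : SeqEquiv Γ Δ := by
  induction h with
  | nil => exact .nil
  | cons _ _ ih => exact .cons ih
  | swap x y l => exact .swap y x l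
  | trans _ _ ih1 ih2 => exact .trans ih1 ih2

lemma seqEquiv_append_left (Θ : Sequent) {Γ Δ : Sequent} (h : SeqEquiv Γ Δ) :
    SeqEquiv (Θ ++ Γ) (Θ ++ Δ) := by
  induction Θ with
  | nil => exact h
  | cons e Θ ih => exact .cons ih

lemma fill_equiv (c : Ctx) {Γ Δ : Sequent} (h : SeqEquiv Γ Δ) :
    SeqEquiv (c.fill Γ) (c.fill Δ) := by
  induction c generalizing Γ Δ with
  | hole Θ => exact seqEquiv_append_left Θ h
  | nest Θ c ih => exact .consNest (ih h) (seqEquiv_refl Θ)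

/-- Extend a context by adding elements just before the hole. -/
def Ctx.extend : Ctx → Sequent → Ctx
  | .hole Δ, E => .hole (Δ ++ E)
  | .nest Δ c, E => .nest Δ (c.extend E)

lemma extend_fill (c : Ctx) (E Γ : Sequent) :
    (c.extend E).fill Γ = c.fill (E ++ Γ) := by
  induction c with
  | hole Δ => simp [Ctx.extend, Ctx.fill, List.append_assoc]
  | nest Δ c ih => simp [Ctx.extend, Ctx.fill, ih]

/-- Compose two contexts (correct up to exchange). -/
def Ctx.comp : Ctx → Ctx → Ctx
  | .hole Δ, .hole Θ => .hole (Δ ++ Θ)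
  | .hole Δ, .nest Θ d => .nest (Δ ++ Θ) d
  | .nest Δ c, d => .nest Δ (c.comp d)

lemma comp_fill (c d : Ctx) (Γ : Sequent) :
    SeqEquiv ((c.comp d).fill Γ) (c.fill (d.fill Γ)) := by
  induction c with
  | hole Δ =>
    cases d with
    | hole Θ => simpa [Ctx.comp, Ctx.fill, List.append_assoc] using
        seqEquiv_refl (Δ ++ (Θ ++ Γ))
    | nest Θ d =>
      simp only [Ctx.comp, Ctx.fill]
      exact seqEquiv_of_perm List.perm_middle.symm
  | nest Δ c ih => exact .consNest (ih) (seqEquiv_refl Δ)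

lemma negate_negate (A : Formula) : A.negate.negate = A := by
  induction A <;> simp [Formula.negate, *]

/-- the identity rule on arbitrary formulas is admissible. -/
theorem identity_admissible (c : Ctx) (A : Formula) :
    Deriv (c.fill [.fml A.negate, .fml A]) := by
  induction A generalizing c with
  | pos a =>
    exact .exch (fill_equiv c (.swap _ _ [])) (.id c a)
  | neg a =>
    exact .id c a
  | and A B ihA ihB =>
    -- goal: c.fill [or A⊥ B⊥, and A B]
    have hA : Deriv (c.fill [.fml A.negate, .fml B.negate, .fml A]) := by
      have := ihA (c.extend [.fml B.negate])
      rw [extend_fill] at this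
      exact .exch (fill_equiv c (.swap _ _ _)) this
    have hB : Deriv (c.fill [.fml A.negate, .fml B.negate, .fml B]) := by
      have := ihB (c.extend [.fml A.negate])
      rw [extend_fill] at this
      exact this
    have hand : Deriv (c.fill [.fml A.negate, .fml B.negate, .fml (.and A B)]) := by
      have := DerivWith.and (c := c.extend [.fml A.negate, .fml B.negate])
        (A := A) (B := B)
        (by rw [extend_fill]; exact hA) (by rw [extend_fill]; exact hB)
      rw [extend_fill] at this
      exact this
    have hand' : Deriv (c.fill [.fml (.and A B), .fml A.negate, .fml B.negate]) :=
      .exch (fill_equiv c (.trans (.cons (.swap _ _ _)) (.swap _ _ _))) hand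
    have hor : Deriv (c.fill [.fml (.and A B), .fml (.or A.negate B.negate)]) := by
      have := DerivWith.or (c := c.extend [.fml (.and A B)])
        (A := A.negate) (B := B.negate) (by rw [extend_fill]; exact hand')
      rw [extend_fill] at this
      exact this
    exact .exch (fill_equiv c (.swap _ _ _)) hor
  | or A B ihA ihB =>
    -- goal: c.fill [and A⊥ B⊥, or A B]
    have hA : Deriv (c.fill [.fml A.negate, .fml A, .fml B]) := by
      have := ihA (c.extend [.fml B])
      rw [extend_fill] at this
      exact .exch (fill_equiv c (.trans (.swap _ _ _) (.cons (.swap _ _ _)))) this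
    have hB : Deriv (c.fill [.fml B.negate, .fml A, .fml B]) := by
      have := ihB (c.extend [.fml A])
      rw [extend_fill] at this
      exact .exch (fill_equiv c (.swap _ _ _)) this
    have pA : Deriv (c.fill [.fml (.or A B), .fml A.negate]) := by
      have := DerivWith.or (c := c.extend [.fml A.negate]) (A := A) (B := B)
        (by rw [extend_fill]; exact hA)
      rw [extend_fill] at this
      exact .exch (fill_equiv c (.swap _ _ _)) this
    have pB : Deriv (c.fill [.fml (.or A B), .fml B.negate]) := by
      have := DerivWith.or (c := c.extend [.fml B.negate]) (A := A) (B := B)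
        (by rw [extend_fill]; exact hB)
      rw [extend_fill] at this
      exact .exch (fill_equiv c (.swap _ _ _)) this
    have hand : Deriv (c.fill [.fml (.or A B), .fml (.and A.negate B.negate)]) := by
      have := DerivWith.and (c := c.extend [.fml (.or A B)])
        (A := A.negate) (B := B.negate)
        (by rw [extend_fill]; exact pA) (by rw [extend_fill]; exact pB)
      rw [extend_fill] at this
      exact this
    exact .exch (fill_equiv c (.swap _ _ _)) hand
  | box A ih =>
    -- goal: c.fill [dia A⊥, box A]
    set X : SeqElem := .fml (.dia A.negate) with hX
    have base : Deriv (c.fill [X, .nest [X, .fml A.negate, .fml A]]) := by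
      have h := ih ((c.extend [X]).comp (.nest [] (.hole [X])))
      have h2 := DerivWith.exch
        (comp_fill (c.extend [X]) (.nest [] (.hole [X])) [.fml A.negate, .fml A]) h
      rw [extend_fill] at h2
      exact h2
    have prem : Deriv (c.fill [.nest [X, .fml A, .fml A.negate], X]) := by
      refine .exch (fill_equiv c ?_) base
      exact .trans (.cons (.consNest (.cons (.swap _ _ _)) .nil)) (.swap _ _ _)
    have hdia : Deriv (c.fill [.nest [X, .fml A], X]) := by
      have := DerivWith.dia (P := fun _ => False) c
        (.nest [] (.hole [X, .fml A])) (A := A.negate)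
        (by simp [Ctx.depth]) (by simpa [Ctx.fill, hX] using prem)
      simpa [Ctx.fill, hX] using this
    have hbox : Deriv (c.fill [X, .nest [X, .fml A]]) :=
      .exch (fill_equiv c (.swap _ _ _)) hdia
    have := DerivWith.box (c := c.extend [X]) (A := A)
      (by rw [extend_fill]; exact hbox)
    rw [extend_fill] at this
    exact this
  | dia A ih =>
    -- goal: c.fill [box A⊥, dia A]
    set X : SeqElem := .fml (.dia A) with hX
    have base : Deriv (c.fill [X, .nest [X, .fml A.negate, .fml A]]) := by
      have h := ih ((c.extend [X]).comp (.nest [] (.hole [X])))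
      have h2 := DerivWith.exch
        (comp_fill (c.extend [X]) (.nest [] (.hole [X])) [.fml A.negate, .fml A]) h
      rw [extend_fill] at h2
      exact h2
    have prem : Deriv (c.fill [.nest [X, .fml A.negate, .fml A], X]) :=
      .exch (fill_equiv c (.swap _ _ _)) base
    have hdia : Deriv (c.fill [.nest [X, .fml A.negate], X]) := by
      have := DerivWith.dia (P := fun _ => False) c
        (.nest [] (.hole [X, .fml A.negate])) (A := A)
        (by simp [Ctx.depth]) (by simpa [Ctx.fill, hX] using prem)
      simpa [Ctx.fill, hX] using this
    have hbox : Deriv (c.fill [X, .nest [.fml (.dia A.negate.negate), .fml A.negate]]) := by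
      rw [negate_negate]
      exact .exch (fill_equiv c (.swap _ _ _)) hdia
    have := DerivWith.box (c := c.extend [X]) (A := A.negate)
      (by rw [extend_fill]; exact hbox)
    rw [extend_fill] at this
    exact .exch (fill_equiv c (.swap _ _ _)) this
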